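/- Let 0 < a < b and f(x) = log x. Let P, Q be the Hermite interpolants of degree ≤ 3 with P matching f, f', f'' at a and f at b, and Q matching f at a and f, f', f'' at b (i.e., m₁ = 2, m₂ = 0). Then the unique x₀ ∈ (a,b) with P(x₀) = Q(x₀) is x₀ = 3ab·(b² - a² - 2ab·log(b/a))/(b-a)³. -/

import Mathlib

theorem stmt16 (a b : ℝ) (ha : 0 < a) (hab : a < b)
    (P Q : Polynomial ℝ) (hPdeg : P.natDegree ≤ 3) (hQdeg : Q.natDegree ≤ 3)
    (hPa : ∀ j ≤ 2, iteratedDeriv j (fun t => P.eval t) a = iteratedDeriv j Real.log a)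
    (hPb : P.eval b = Real.log b)
    (hQa : Q.eval a = Real.log a)
    (hQb : ∀ j ≤ 2, iteratedDeriv j (fun t => Q.eval t) b = iteratedDeriv j Real.log b) :
    ∀ x ∈ Set.Ioo a b,
      (P.eval x = Q.eval x ↔
        x = 3 * a * b * (b ^ 2 - a ^ 2 - 2 * a * b * Real.log (b / a)) / (b - a) ^ 3) := by
  have hb : 0 < b := lt_trans ha hab
  have ha0 : a ≠ 0 := ha.ne'
  have hb0 : b ≠ 0 := hb.ne'
  have hba : b - a ≠ 0 := sub_ne_zero.mpr hab.ne'
  -- helper lemmas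
  have iter1 : ∀ (R : Polynomial ℝ) (t : ℝ),
      iteratedDeriv 1 (fun s => R.eval s) t = R.derivative.eval t := by
    intro R t; rw [iteratedDeriv_one]; exact Polynomial.deriv R
  have iter2 : ∀ (R : Polynomial ℝ) (t : ℝ),
      iteratedDeriv 2 (fun s => R.eval s) t = R.derivative.derivative.eval t := by
    intro R t
    rw [show (2:ℕ) = 1+1 from rfl, iteratedDeriv_succ, iteratedDeriv_one]
    have : deriv (fun s => R.eval s) = fun s => R.derivative.eval s := by
      funext s; exact Polynomial.deriv R
    rw [this]; exact Polynomial.deriv R.derivative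
  have log1 : ∀ t : ℝ, iteratedDeriv 1 Real.log t = t⁻¹ := by
    intro t; rw [iteratedDeriv_one]; exact Real.deriv_log t
  have log2 : ∀ t : ℝ, iteratedDeriv 2 Real.log t = -(t^2)⁻¹ := by
    intro t
    rw [show (2:ℕ) = 1+1 from rfl, iteratedDeriv_succ, iteratedDeriv_one, Real.deriv_log']
    exact deriv_inv
  have ev : ∀ (R : Polynomial ℝ), R.natDegree ≤ 3 → ∀ t : ℝ,
      R.eval t = R.coeff 0 + R.coeff 1 * t + R.coeff 2 * t^2 + R.coeff 3 * t^3 := by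
    intro R h t
    rw [Polynomial.eval_eq_sum_range' (lt_of_le_of_lt h (by norm_num : (3:ℕ) < 4))]
    simp [Finset.sum_range_succ]; try ring
  have ev1 : ∀ (R : Polynomial ℝ), R.natDegree ≤ 3 → ∀ t : ℝ,
      R.derivative.eval t = R.coeff 1 + 2 * R.coeff 2 * t + 3 * R.coeff 3 * t^2 := by
    intro R h t
    have h2 : R.derivative.natDegree < 3 :=
      lt_of_le_of_lt (Polynomial.natDegree_derivative_le R) (by omega)
    rw [Polynomial.eval_eq_sum_range' h2]
    simp [Finset.sum_range_succ, Polynomial.coeff_derivative]; try ring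
  have ev2 : ∀ (R : Polynomial ℝ), R.natDegree ≤ 3 → ∀ t : ℝ,
      R.derivative.derivative.eval t = 2 * R.coeff 2 + 6 * R.coeff 3 * t := by
    intro R h t
    have h2 : R.derivative.derivative.natDegree < 2 := by
      have := Polynomial.natDegree_derivative_le R
      have := Polynomial.natDegree_derivative_le R.derivative
      omega
    rw [Polynomial.eval_eq_sum_range' h2]
    simp [Finset.sum_range_succ, Polynomial.coeff_derivative]; try ring
  set p0 := P.coeff 0; set p1 := P.coeff 1; set p2 := P.coeff 2; set p3 := P.coeff 3
  set q0 := Q.coeff 0; set q1 := Q.coeff 1; set q2 := Q.coeff 2; set q3 := Q.coeff 3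
  set La := Real.log a with hLa
  set Lb := Real.log b with hLb
  -- P equations
  have A0 : p0 + p1*a + p2*a^2 + p3*a^3 = La := by
    have h := hPa 0 (by norm_num)
    simp only [iteratedDeriv_zero] at h
    rw [ev P hPdeg a] at h; exact h
  have A3 : p0 + p1*b + p2*b^2 + p3*b^3 = Lb := by
    rw [← hPb, ev P hPdeg b]
  have A1 : p1*a + 2*p2*a^2 + 3*p3*a^3 = 1 := by
    have h := hPa 1 (by norm_num)
    rw [iter1, log1, ev1 P hPdeg a] at h
    have h2 : (p1 + 2*p2*a + 3*p3*a^2) * a = a⁻¹ * a := by rw [h]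
    rw [inv_mul_cancel₀ ha0] at h2
    linear_combination h2
  have A2 : 2*p2*a^2 + 6*p3*a^3 = -1 := by
    have h := hPa 2 (by norm_num)
    rw [iter2, log2, ev2 P hPdeg a] at h
    have h2 : (2*p2 + 6*p3*a) * a^2 = -(a^2)⁻¹ * a^2 := by rw [h]
    rw [neg_mul, inv_mul_cancel₀ (pow_ne_zero 2 ha0)] at h2
    linear_combination h2
  -- Q equations
  have B3 : q0 + q1*a + q2*a^2 + q3*a^3 = La := by
    rw [← hQa, ev Q hQdeg a]
  have B0 : q0 + q1*b + q2*b^2 + q3*b^3 = Lb := by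
    have h := hQb 0 (by norm_num)
    simp only [iteratedDeriv_zero] at h
    rw [ev Q hQdeg b] at h; exact h
  have B1 : q1*b + 2*q2*b^2 + 3*q3*b^3 = 1 := by
    have h := hQb 1 (by norm_num)
    rw [iter1, log1, ev1 Q hQdeg b] at h
    have h2 : (q1 + 2*q2*b + 3*q3*b^2) * b = b⁻¹ * b := by rw [h]
    rw [inv_mul_cancel₀ hb0] at h2
    linear_combination h2
  have B2 : 2*q2*b^2 + 6*q3*b^3 = -1 := by
    have h := hQb 2 (by norm_num)
    rw [iter2, log2, ev2 Q hQdeg b] at h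
    have h2 : (2*q2 + 6*q3*b) * b^2 = -(b^2)⁻¹ * b^2 := by rw [h]
    rw [neg_mul, inv_mul_cancel₀ (pow_ne_zero 2 hb0)] at h2
    linear_combination h2
  have h3p : 2*(b-a)^3*a^2*p3 = 2*a^2*(Lb-La) - 2*a*(b-a) + (b-a)^2 := by
    linear_combination (-2*a^2)*A0 + (-2*a*(b-a))*A1 + (-(b-a)^2)*A2 + (2*a^2)*A3
  have h3q : 2*(a-b)^3*b^2*q3 = 2*b^2*(La-Lb) - 2*b*(a-b) + (a-b)^2 := by
    linear_combination (-2*b^2)*B0 + (-2*b*(a-b))*B1 + (-(a-b)^2)*B2 + (2*b^2)*B3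
  intro x hx
  obtain ⟨hxa, hxb⟩ := hx
  have hxa0 : x - a ≠ 0 := sub_ne_zero.mpr hxa.ne'
  have hxb0 : x - b ≠ 0 := sub_ne_zero.mpr hxb.ne
  have hPx : 2*a^2*(p0 + p1*x + p2*x^2 + p3*x^3)
      = 2*a^2*La + 2*a*(x-a) - (x-a)^2 + 2*a^2*p3*(x-a)^3 := by
    linear_combination (2*a^2)*A0 + (2*a*(x-a))*A1 + ((x-a)^2)*A2
  have hQx : 2*b^2*(q0 + q1*x + q2*x^2 + q3*x^3)
      = 2*b^2*Lb + 2*b*(x-b) - (x-b)^2 + 2*b^2*q3*(x-b)^3 := by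
    linear_combination (2*b^2)*B0 + (2*b*(x-b))*B1 + ((x-b)^2)*B2
  have key : 2*a^2*b^2*(b-a)^3*((p0 + p1*x + p2*x^2 + p3*x^3) - (q0 + q1*x + q2*x^2 + q3*x^3))
      = (b-a)*(x-a)*(x-b)*((b-a)^3*x - 3*a*b*(b^2 - a^2 - 2*a*b*(Lb-La))) := by
    linear_combination (b^2*(b-a)^3)*hPx - (a^2*(b-a)^3)*hQx
      + (b^2*(x-a)^3)*h3p + (a^2*(x-b)^3)*h3q
  have hlogdiv : Real.log (b/a) = Lb - La := Real.log_div hb0 ha0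
  rw [ev P hPdeg x, ev Q hQdeg x, hlogdiv]
  constructor
  · intro h
    have hz : (b-a)*(x-a)*(x-b)*((b-a)^3*x - 3*a*b*(b^2 - a^2 - 2*a*b*(Lb-La))) = 0 := by
      rw [← key, sub_eq_zero.mpr h]; ring
    have hz2 : (b-a)^3*x - 3*a*b*(b^2 - a^2 - 2*a*b*(Lb-La)) = 0 := by
      have hne : (b-a)*(x-a)*(x-b) ≠ 0 := by
        exact mul_ne_zero (mul_ne_zero hba hxa0) hxb0
      rcases mul_eq_zero.mp hz with h' | h'
      · exact absurd h' hne
      · exact h'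
    field_simp
    linarith [hz2]
  · intro h
    have hx' : (b-a)^3*x - 3*a*b*(b^2 - a^2 - 2*a*b*(Lb-La)) = 0 := by
      rw [h]; field_simp; ring
    have h0 : 2*a^2*b^2*(b-a)^3*((p0 + p1*x + p2*x^2 + p3*x^3) - (q0 + q1*x + q2*x^2 + q3*x^3)) = 0 := by
      rw [key, hx', mul_zero]
    have hc : 2*a^2*b^2*(b-a)^3 ≠ 0 := by positivity
    have := mul_eq_zero.mp h0
    rcases this with h' | h'
    · exact absurd h' hc
    · linarith [sub_eq_zero.mp h']
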